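/- Let l ≥ 1 be an odd integer and b₁ ∈ ℝ. In ℝ^{2l+4}, with standard basis vectors e₁, …, e_{2l+4}, the 2l + 3 vectors e₁, e₁ + b₁·e_{2l+4}, e_{l+3}, together with e_{j+1} + e_{j+3} for j = 0, 1, …, l − 1 and e_{l+3+j} + e_{l+5+j} for j = 0, 1, …, l − 1, are linearly dependent. -/
import Mathlib


/-- The family of `2l + 3` vectors `e₁`, `e₁ + b₁·e_{2l+4}`, `e_{l+3}`,
`e_{j+1} + e_{j+3}` (`j = 0, …, l−1`) and `e_{l+3+j} + e_{l+5+j}` (`j = 0, …, l−1`)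
in `ℝ^{2l+4}` (standard basis indexed from `0`). -/
def vecFamily (l : ℕ) (b₁ : ℝ) : Fin (2 * l + 3) → (Fin (2 * l + 4) → ℝ) := fun j =>
  if (j : ℕ) = 0 then
    (Pi.single (0 : Fin (2 * l + 4)) (1 : ℝ) : Fin (2 * l + 4) → ℝ)
  else if (j : ℕ) = 1 then
    (Pi.single (0 : Fin (2 * l + 4)) (1 : ℝ) : Fin (2 * l + 4) → ℝ)
      + b₁ • (Pi.single (Fin.last (2 * l + 3)) (1 : ℝ) : Fin (2 * l + 4) → ℝ)
  else if (j : ℕ) = 2 then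
    (Pi.single (⟨l + 2, by omega⟩ : Fin (2 * l + 4)) (1 : ℝ) : Fin (2 * l + 4) → ℝ)
  else if (j : ℕ) < l + 3 then
    (Pi.single (⟨(j : ℕ) - 3, by have := j.isLt; omega⟩ : Fin (2 * l + 4)) (1 : ℝ)
        : Fin (2 * l + 4) → ℝ)
      + (Pi.single (⟨(j : ℕ) - 1, by have := j.isLt; omega⟩ : Fin (2 * l + 4)) (1 : ℝ)
        : Fin (2 * l + 4) → ℝ)
  else
    (Pi.single (⟨(j : ℕ) - 1, by have := j.isLt; omega⟩ : Fin (2 * l + 4)) (1 : ℝ)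
        : Fin (2 * l + 4) → ℝ)
      + (Pi.single (⟨(j : ℕ) + 1, by have := j.isLt; omega⟩ : Fin (2 * l + 4)) (1 : ℝ)
        : Fin (2 * l + 4) → ℝ)

private lemma sum_range_two_mul' {M : Type*} [AddCommMonoid M] (f : ℕ → M) (n : ℕ) :
    ∑ k ∈ Finset.range (2*n), f k = ∑ i ∈ Finset.range n, (f (2*i) + f (2*i+1)) := by
  induction n with
  | zero => simp
  | succ n ih =>
    have h : 2*(n+1) = (2*n+1)+1 := by ring
    rw [h, Finset.sum_range_succ, Finset.sum_range_succ, ih, Finset.sum_range_succ, add_assoc]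

theorem system_not_linearIndependent_odd (l : ℕ) (hl : 1 ≤ l) (hlo : Odd l) (b₁ : ℝ) :
    ¬ LinearIndependent ℝ (vecFamily l b₁) := by
  obtain ⟨m, hm⟩ := hlo
  obtain ⟨c, hc⟩ : ∃ c : ℝ, c = b₁ * (-1)^m := ⟨_, rfl⟩
  set E : ℕ → (Fin (2*l+4) → ℝ) := fun n =>
    if h : n < 2*l+4 then Pi.single (⟨n, h⟩ : Fin (2*l+4)) (1:ℝ) else 0 with hE
  have hEeq : ∀ (k : ℕ) (h : k < 2*l+4),
      (Pi.single (⟨k, h⟩ : Fin (2*l+4)) (1:ℝ) : Fin (2*l+4) → ℝ) = E k := by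
    intro k h
    rw [hE]
    simp only [dif_pos h]
  set G : ℕ → ℝ := fun n =>
    if n = 0 then 1 else if n = 1 then -1 else if n = 2 then -c
    else if n < l+3 then 0
    else if (n - (l+3)) % 2 = 0 then c * (-1)^((n-(l+3))/2) else 0 with hG
  set F : ℕ → (Fin (2*l+4) → ℝ) := fun n =>
    G n • (if n = 0 then E 0 else if n = 1 then E 0 + b₁ • E (2*l+3)
      else if n = 2 then E (l+2) else if n < l+3 then E (n-3) + E (n-1)
      else E (n-1) + E (n+1)) with hF
  rw [Fintype.not_linearIndependent_iff]
  refine ⟨fun j => G (j:ℕ), ?_, ⟨⟨0, by omega⟩, by simp [hG]⟩⟩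
  have hstep : ∀ j : Fin (2*l+3), G (j:ℕ) • vecFamily l b₁ j = F (j:ℕ) := by
    intro j
    have hj := j.isLt
    have hE0 : (Pi.single (0 : Fin (2*l+4)) (1:ℝ) : Fin (2*l+4) → ℝ) = E 0 := by
      rw [← hEeq 0 (by omega)]
      congr 1
    have hElast : (Pi.single (Fin.last (2*l+3)) (1:ℝ) : Fin (2*l+4) → ℝ) = E (2*l+3) := by
      rw [← hEeq (2*l+3) (by omega)]
      congr 1
    simp only [hF]
    unfold vecFamily
    split_ifs with h0 h1 h2 h3 <;> simp only [hE0, hElast, hEeq]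
  show ∑ j : Fin (2*l+3), G (j:ℕ) • vecFamily l b₁ j = 0
  calc ∑ j : Fin (2*l+3), G (j:ℕ) • vecFamily l b₁ j
      = ∑ j : Fin (2*l+3), F (j:ℕ) := Finset.sum_congr rfl (fun j _ => hstep j)
    _ = ∑ n ∈ Finset.range (2*l+3), F n := Fin.sum_univ_eq_sum_range F _
    _ = 0 := by
        rw [Finset.range_eq_Ico,
          ← Finset.sum_Ico_consecutive F (by omega : 0 ≤ l+3) (by omega : l+3 ≤ 2*l+3),
          ← Finset.sum_Ico_consecutive F (by omega : (0:ℕ) ≤ 3) (by omega : 3 ≤ l+3)]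
        have hmid : ∑ n ∈ Finset.Ico 3 (l+3), F n = 0 := by
          apply Finset.sum_eq_zero
          intro n hn
          simp only [Finset.mem_Ico] at hn
          simp only [hF, hG]
          rw [if_neg (by omega : ¬ n = 0), if_neg (by omega : ¬ n = 1),
            if_neg (by omega : ¬ n = 2), if_pos hn.2]
          exact zero_smul _ _
        have hfirst : ∑ n ∈ Finset.Ico 0 3, F n = F 0 + F 1 + F 2 := by
          rw [Finset.sum_Ico_eq_sum_range]
          norm_num [Finset.sum_range_succ]
        set f : ℕ → (Fin (2*l+4) → ℝ) := fun i => ((-1:ℝ)^i) • E (l+2+2*i) with hfdef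
        have hlast : ∑ n ∈ Finset.Ico (l+3) (2*l+3), F n
            = c • (E (l+2) + ((-1:ℝ)^m) • E (2*l+3)) := by
          rw [Finset.sum_Ico_eq_sum_range]
          have hll : 2*l+3 - (l+3) = l := by omega
          rw [hll]
          set h : ℕ → (Fin (2*l+4) → ℝ) := fun k =>
            (if k % 2 = 0 then c * (-1)^(k/2) else 0) • (E (l+2+k) + E (l+4+k)) with hh
          have hFk : ∀ k ∈ Finset.range l, F (l+3+k) = h k := by
            intro k hk
            simp only [Finset.mem_range] at hk
            simp only [hF, hG, hh]
            rw [if_neg (by omega : ¬ l+3+k = 0), if_neg (by omega : ¬ l+3+k = 1),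
              if_neg (by omega : ¬ l+3+k = 2), if_neg (by omega : ¬ l+3+k < l+3),
              if_neg (by omega : ¬ l+3+k = 0), if_neg (by omega : ¬ l+3+k = 1),
              if_neg (by omega : ¬ l+3+k = 2), if_neg (by omega : ¬ l+3+k < l+3),
              show l+3+k - (l+3) = k from by omega,
              show l+3+k - 1 = l+2+k from by omega,
              show l+3+k + 1 = l+4+k from by omega]
          rw [Finset.sum_congr rfl hFk]
          have hodd : ∀ i, h (2*i+1) = 0 := by
            intro i
            rw [hh]
            simp [Nat.mul_add_mod]
          have hl0 : h l = 0 := by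
            have := hodd m
            rwa [← hm] at this
          have hext : ∑ k ∈ Finset.range l, h k = ∑ k ∈ Finset.range (2*(m+1)), h k := by
            rw [show 2*(m+1) = l+1 from by omega, Finset.sum_range_succ, hl0, add_zero]
          rw [hext, sum_range_two_mul']
          have heven : ∀ i, h (2*i) + h (2*i+1) = c • (f i - f (i+1)) := by
            intro i
            rw [hodd i, add_zero, hh, hfdef]
            simp only [Nat.mul_mod_right, eq_self_iff_true, if_true,
              Nat.mul_div_cancel_left _ (by norm_num : 0 < 2)]
            rw [show l+2+2*(i+1) = l+4+2*i from by omega, pow_succ]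
            module
          rw [Finset.sum_congr rfl (fun i _ => heven i), ← Finset.smul_sum,
            Finset.sum_range_sub' f (m+1)]
          rw [hfdef]
          simp only
          rw [show l+2+2*0 = l+2 from by omega, show l+2+2*(m+1) = 2*l+3 from by omega,
            pow_zero, one_smul, pow_succ]
          module
        rw [hmid, hfirst, hlast]
        have hF0 : F 0 = E 0 := by simp [hF, hG]
        have hF1 : F 1 = -(E 0 + b₁ • E (2*l+3)) := by simp [hF, hG]; abel
        have hF2 : F 2 = -(c • E (l+2)) := by simp [hF, hG]
        have hcc : c • ((-1:ℝ)^m • E (2*l+3)) = b₁ • E (2*l+3) := by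
          rw [smul_smul, hc, mul_assoc, ← pow_add, ← two_mul, pow_mul]
          norm_num
        rw [smul_add, hcc, hF0, hF1, hF2]
        module
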